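/- For all α ∈ [0,2]: T(α) ≥ (90+19α)·2/(α+9), where T(α) = (90+19α)·Γ(α/2+2)·Γ(α+9/2) / (Γ(α/2+11/2)·Γ(α+2)). -/

import Mathlib

lemma gamma_spread {a b s : ℝ} (ha : 0 < a) (hs : 0 ≤ s) (hsb : s ≤ b - a) :
    Real.Gamma (a + s) * Real.Gamma (b - s) ≤ Real.Gamma a * Real.Gamma b := by
  have hb : 0 < b := by linarith
  have has : 0 < a + s := by linarith
  have hbs : 0 < b - s := by linarith
  rcases eq_or_lt_of_le (show a ≤ b by linarith) with hab | hab
  · have hs0 : s = 0 := le_antisymm (by linarith) hs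
    simp [hs0, mul_comm]
  · set c := b - a with hc
    have hcpos : 0 < c := by simp only [hc]; linarith
    set lam := s / c with hlam
    have hl0 : 0 ≤ lam := div_nonneg hs hcpos.le
    have hl1 : lam ≤ 1 := by rw [hlam, div_le_one hcpos]; linarith
    have h1 : a + s = (1 - lam) * a + lam * b := by
      have hlc : lam * c = s := div_mul_cancel₀ s hcpos.ne'
      linear_combination -hlc + lam * hc
    have h2 : b - s = lam * a + (1 - lam) * b := by
      have hlc : lam * c = s := div_mul_cancel₀ s hcpos.ne'
      linear_combination hlc - lam * hc
    have A := Real.convexOn_log_Gamma.2 (Set.mem_Ioi.2 ha) (Set.mem_Ioi.2 hb)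
      (show (0:ℝ) ≤ 1 - lam by linarith) hl0 (by ring)
    have B := Real.convexOn_log_Gamma.2 (Set.mem_Ioi.2 ha) (Set.mem_Ioi.2 hb)
      hl0 (show (0:ℝ) ≤ 1 - lam by linarith) (by ring)
    simp only [smul_eq_mul, Function.comp] at A B
    rw [← h1] at A
    rw [← h2] at B
    have hsum : Real.log (Real.Gamma (a + s)) + Real.log (Real.Gamma (b - s)) ≤
        Real.log (Real.Gamma a) + Real.log (Real.Gamma b) := by
      have hr : (1 - lam) * Real.log (Real.Gamma a) + lam * Real.log (Real.Gamma b) +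
          (lam * Real.log (Real.Gamma a) + (1 - lam) * Real.log (Real.Gamma b)) =
          Real.log (Real.Gamma a) + Real.log (Real.Gamma b) := by ring
      linarith [add_le_add A B]
    have key : Real.log (Real.Gamma (a + s) * Real.Gamma (b - s)) ≤
        Real.log (Real.Gamma a * Real.Gamma b) := by
      rw [Real.log_mul (Real.Gamma_pos_of_pos has).ne' (Real.Gamma_pos_of_pos hbs).ne',
        Real.log_mul (Real.Gamma_pos_of_pos ha).ne' (Real.Gamma_pos_of_pos hb).ne']
      exact hsum
    exact (Real.log_le_log_iff
      (mul_pos (Real.Gamma_pos_of_pos has) (Real.Gamma_pos_of_pos hbs))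
      (mul_pos (Real.Gamma_pos_of_pos ha) (Real.Gamma_pos_of_pos hb))).mp key

theorem stmt7 (α : ℝ) (hα : α ∈ Set.Icc (0:ℝ) 2) :
    (90 + 19 * α) * 2 / (α + 9) ≤
      (90 + 19 * α) * Real.Gamma (α / 2 + 2) * Real.Gamma (α + 9 / 2) /
        (Real.Gamma (α / 2 + 11 / 2) * Real.Gamma (α + 2)) := by
  obtain ⟨h0, h2⟩ := hα
  have key : Real.Gamma (α + 2) * Real.Gamma (α / 2 + 9 / 2) ≤
      Real.Gamma (α / 2 + 2) * Real.Gamma (α + 9 / 2) := by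
    have h := gamma_spread (a := α / 2 + 2) (b := α + 9 / 2) (s := α / 2)
      (by linarith) (by linarith) (by linarith)
    have e1 : α / 2 + 2 + α / 2 = α + 2 := by ring
    have e2 : α + 9 / 2 - α / 2 = α / 2 + 9 / 2 := by ring
    rwa [e1, e2] at h
  have e : α / 2 + 11 / 2 = (α / 2 + 9 / 2) + 1 := by ring
  rw [e, Real.Gamma_add_one (show α / 2 + 9 / 2 ≠ 0 by positivity)]
  have g1 : 0 < Real.Gamma (α / 2 + 2) := Real.Gamma_pos_of_pos (by linarith)
  have g2 : 0 < Real.Gamma (α + 9 / 2) := Real.Gamma_pos_of_pos (by linarith)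
  have g3 : 0 < Real.Gamma (α / 2 + 9 / 2) := Real.Gamma_pos_of_pos (by linarith)
  have g4 : 0 < Real.Gamma (α + 2) := Real.Gamma_pos_of_pos (by linarith)
  rw [div_le_div_iff₀ (by linarith) (by positivity)]
  nlinarith [mul_le_mul_of_nonneg_left key (show (0:ℝ) ≤ 90 + 19 * α by linarith),
    mul_pos g1 g2, mul_pos g3 g4]
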